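/- Fix ρ > 0 and 1/2 < α < 1. Define F(t) = coth((2α−1)t) − coth(t) − 2 coth(ρ) for t ∈ (0, ρ/(2α−1)]. Then F is strictly decreasing and there exists a unique t₋ ∈ (0, ρ/(2α−1)) such that {t ∈ (0, ρ/(2α−1)] : F(t) ≥ 0} = (0, t₋]. -/

import Mathlib

noncomputable def coth (x : ℝ) : ℝ := Real.cosh x / Real.sinh x

lemma coth_pos {x : ℝ} (hx : 0 < x) : 0 < coth x :=
  div_pos (Real.cosh_pos x) (Real.sinh_pos_iff.2 hx)

/-- Generic: a function vanishing at 0 with positive derivative on `(0,∞)` is positive there. -/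
lemma aux_pos {f f' : ℝ → ℝ} (hd : ∀ x, HasDerivAt f (f' x) x)
    (h0 : f 0 = 0) (hp : ∀ x, 0 < x → 0 < f' x) {x : ℝ} (hx : 0 < x) : 0 < f x := by
  have hmono : StrictMonoOn f (Set.Ici 0) := by
    apply strictMonoOn_of_deriv_pos (convex_Ici 0)
    · exact (Differentiable.continuous fun y => (hd y).differentiableAt).continuousOn
    · intro y hy
      rw [interior_Ici] at hy
      rw [(hd y).deriv]
      exact hp y hy
  have := hmono Set.self_mem_Ici (Set.mem_Ici.2 hx.le) hx
  rw [h0] at this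
  exact this

lemma sinh_mul_lt {s t : ℝ} (hs0 : 0 < s) (hs1 : s < 1) (ht : 0 < t) :
    Real.sinh (s * t) < s * Real.sinh t := by
  have hd : ∀ x, HasDerivAt (fun t => s * Real.sinh t - Real.sinh (s * t))
      (s * Real.cosh x - Real.cosh (s * x) * s) x := by
    intro x
    have hinner : HasDerivAt (fun y : ℝ => s * y) s x := by
      simpa using (hasDerivAt_id x).const_mul s
    exact ((Real.hasDerivAt_sinh x).const_mul s).sub
      ((Real.hasDerivAt_sinh (s * x)).comp x hinner)
  have key := aux_pos hd (by simp) (fun x hx => by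
    have hc : Real.cosh (s * x) < Real.cosh x := by
      rw [Real.cosh_lt_cosh, abs_of_pos (by positivity), abs_of_pos hx]
      nlinarith
    nlinarith) ht
  linarith

lemma sinh_lt_mul_cosh {x : ℝ} (hx : 0 < x) : Real.sinh x < x * Real.cosh x := by
  have hd : ∀ y, HasDerivAt (fun y => y * Real.cosh y - Real.sinh y) (y * Real.sinh y) y := by
    intro y
    have h2 := ((hasDerivAt_id y).mul (Real.hasDerivAt_cosh y)).sub (Real.hasDerivAt_sinh y)
    refine h2.congr_deriv ?_; simp only [id_eq]; ring
  have key := aux_pos hd (by simp) (fun y hy =>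
    mul_pos hy (Real.sinh_pos_iff.2 hy)) hx
  linarith

lemma mul_cosh_lt {x : ℝ} (hx : 0 < x) :
    x * Real.cosh x < (1 + x ^ 2) * Real.sinh x := by
  have hd : ∀ y, HasDerivAt (fun y => (1 + y ^ 2) * Real.sinh y - y * Real.cosh y)
      (2 * y * Real.sinh y + (1 + y ^ 2) * Real.cosh y
        - (Real.cosh y + y * Real.sinh y)) y := by
    intro y
    have h1 := (((hasDerivAt_pow 2 y).const_add 1).mul (Real.hasDerivAt_sinh y)).sub
      ((hasDerivAt_id y).mul (Real.hasDerivAt_cosh y))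
    refine h1.congr_deriv ?_; simp only [id_eq]; push_cast; ring
  have key := aux_pos hd (by simp) (fun y hy => by
    have hs := Real.sinh_pos_iff.2 hy
    have hc := Real.cosh_pos y
    nlinarith) hx
  linarith

lemma one_div_lt_coth {x : ℝ} (hx : 0 < x) : 1 / x < coth x := by
  rw [coth, div_lt_div_iff₀ hx (Real.sinh_pos_iff.2 hx)]
  nlinarith [sinh_lt_mul_cosh hx]

lemma coth_lt {x : ℝ} (hx : 0 < x) : coth x < 1 / x + x := by
  have h : coth x < (1 + x ^ 2) / x := by
    rw [coth, div_lt_div_iff₀ (Real.sinh_pos_iff.2 hx) hx]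
    nlinarith [mul_cosh_lt hx]
  have e : (1 + x ^ 2) / x = 1 / x + x := by field_simp
  rw [← e]; exact h

lemma coth_hasDerivAt {x : ℝ} (hx : x ≠ 0) :
    HasDerivAt coth (-(1 / Real.sinh x ^ 2)) x := by
  have hs : Real.sinh x ≠ 0 := Real.sinh_ne_zero.2 hx
  have h := (Real.hasDerivAt_cosh x).div (Real.hasDerivAt_sinh x) hs
  refine h.congr_deriv ?_
  field_simp
  nlinarith [Real.cosh_sq_sub_sinh_sq x]

theorem coth_threshold_unique (ρ α : ℝ) (hρ : 0 < ρ) (hα1 : 1 / 2 < α) (hα2 : α < 1) :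
    StrictAntiOn (fun t => coth ((2 * α - 1) * t) - coth t - 2 * coth ρ)
      (Set.Ioc 0 (ρ / (2 * α - 1))) ∧
    ∃! tm : ℝ, tm ∈ Set.Ioo 0 (ρ / (2 * α - 1)) ∧
      {t ∈ Set.Ioc 0 (ρ / (2 * α - 1)) |
          0 ≤ coth ((2 * α - 1) * t) - coth t - 2 * coth ρ} =
        Set.Ioc 0 tm := by
  set s : ℝ := 2 * α - 1 with hs_def
  have hs0 : 0 < s := by rw [hs_def]; linarith
  have hs1 : s < 1 := by rw [hs_def]; linarith
  set c : ℝ := ρ / s with hc_def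
  have hc0 : 0 < c := div_pos hρ hs0
  have hsc : s * c = ρ := by rw [hc_def]; field_simp
  set F : ℝ → ℝ := fun t => coth (s * t) - coth t - 2 * coth ρ with hF_def
  -- continuity
  have hcont : ContinuousOn F (Set.Ioc 0 c) := by
    have h1 : ContinuousOn (fun t : ℝ => Real.cosh (s * t) / Real.sinh (s * t))
        (Set.Ioc 0 c) :=
      ContinuousOn.div
        ((Real.continuous_cosh.comp (continuous_const.mul continuous_id)).continuousOn)
        ((Real.continuous_sinh.comp (continuous_const.mul continuous_id)).continuousOn)
        (fun t ht => ne_of_gt (Real.sinh_pos_iff.2 (mul_pos hs0 ht.1)))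
    have h2 : ContinuousOn (fun t : ℝ => Real.cosh t / Real.sinh t) (Set.Ioc 0 c) :=
      ContinuousOn.div Real.continuous_cosh.continuousOn Real.continuous_sinh.continuousOn
        (fun t ht => ne_of_gt (Real.sinh_pos_iff.2 ht.1))
    exact (h1.sub h2).sub continuousOn_const
  -- strict antitonicity
  have hanti : StrictAntiOn F (Set.Ioc 0 c) := by
    apply strictAntiOn_of_deriv_neg (convex_Ioc 0 c) hcont
    intro x hx
    rw [interior_Ioc] at hx
    obtain ⟨hx0, hxc⟩ := hx
    have hsx : 0 < s * x := mul_pos hs0 hx0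
    have hinner : HasDerivAt (fun y : ℝ => s * y) s x := by
      simpa using (hasDerivAt_id x).const_mul s
    have hD : HasDerivAt F (-(1 / Real.sinh (s * x) ^ 2) * s - -(1 / Real.sinh x ^ 2)) x :=
      (((coth_hasDerivAt (ne_of_gt hsx)).comp x hinner).sub
        (coth_hasDerivAt (ne_of_gt hx0))).sub_const _
    rw [hD.deriv]
    have hA := sinh_mul_lt hs0 hs1 hx0
    have hsx' : 0 < Real.sinh (s * x) := Real.sinh_pos_iff.2 hsx
    have hx' : 0 < Real.sinh x := Real.sinh_pos_iff.2 hx0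
    have key : Real.sinh (s * x) ^ 2 < s * Real.sinh x ^ 2 := by nlinarith
    have h1 : 1 / Real.sinh x ^ 2 < s / Real.sinh (s * x) ^ 2 := by
      rw [div_lt_div_iff₀ (by positivity) (by positivity)]
      nlinarith
    have e : -(1 / Real.sinh (s * x) ^ 2) * s - -(1 / Real.sinh x ^ 2)
        = 1 / Real.sinh x ^ 2 - s / Real.sinh (s * x) ^ 2 := by ring
    rw [e]; linarith
  refine ⟨hanti, ?_⟩
  -- the point a where F ≥ 0
  have hM : 0 < 2 * coth ρ := by linarith [coth_pos hρ]
  have hK : 0 < 1 / s - 1 := by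
    have : 1 < 1 / s := by rw [lt_div_iff₀ hs0]; linarith
    linarith
  set a : ℝ := min (c / 2) (min 1 ((1 / s - 1) / (1 + 2 * coth ρ))) with ha_def
  have ha0 : 0 < a := by
    apply lt_min (by linarith)
    exact lt_min one_pos (div_pos hK (by linarith))
  have hac2 : a ≤ c / 2 := min_le_left _ _
  have hac : a < c := by linarith
  have ha1 : a ≤ 1 := le_trans (min_le_right _ _) (min_le_left _ _)
  have haK : a ≤ (1 / s - 1) / (1 + 2 * coth ρ) := le_trans (min_le_right _ _) (min_le_right _ _)
  have hKa : (1 + 2 * coth ρ) ≤ (1 / s - 1) / a := by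
    rw [le_div_iff₀ ha0]
    have := (le_div_iff₀ (by linarith : (0:ℝ) < 1 + 2 * coth ρ)).1 haK
    linarith
  have hFa : 0 ≤ F a := by
    have b1 := one_div_lt_coth (mul_pos hs0 ha0)
    have b2 := coth_lt ha0
    have e : 1 / (s * a) = (1 / s - 1) / a + 1 / a := by field_simp; ring
    have h1a : 0 < 1 / a := by positivity
    simp only [hF_def]
    rw [e] at b1
    linarith
  have hFc : F c < 0 := by
    simp only [hF_def, hsc]
    have := coth_pos hρ
    have := coth_pos hc0
    linarith
  -- IVT
  have hsub : Set.Icc a c ⊆ Set.Ioc 0 c := fun x hx => ⟨lt_of_lt_of_le ha0 hx.1, hx.2⟩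
  have hivt := intermediate_value_Icc' hac.le (hcont.mono hsub)
  have h0mem : (0 : ℝ) ∈ Set.Icc (F c) (F a) := ⟨hFc.le, hFa⟩
  obtain ⟨tm, htm, hFtm⟩ := hivt h0mem
  have htm0 : 0 < tm := lt_of_lt_of_le ha0 htm.1
  have htmc : tm < c := lt_of_le_of_ne htm.2 (fun h => by rw [h] at hFtm; linarith)
  have htmIoc : tm ∈ Set.Ioc 0 c := ⟨htm0, htmc.le⟩
  refine ⟨tm, ⟨⟨htm0, htmc⟩, ?_⟩, ?_⟩
  · ext t
    simp only [Set.mem_setOf_eq, Set.mem_Ioc]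
    constructor
    · rintro ⟨⟨ht0, htc⟩, hFt⟩
      refine ⟨ht0, ?_⟩
      by_contra h
      push_neg at h
      have := hanti htmIoc ⟨ht0, htc⟩ h
      rw [hFtm] at this
      simp only [hF_def] at this hFt
      linarith
    · rintro ⟨ht0, httm⟩
      have htc : t ≤ c := le_trans httm htmc.le
      refine ⟨⟨ht0, htc⟩, ?_⟩
      rcases eq_or_lt_of_le httm with rfl | hlt
      · simp only [hF_def] at hFtm; linarith
      · have := hanti ⟨ht0, htc⟩ htmIoc hlt
        rw [hFtm] at this
        simp only [hF_def] at this
        linarith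
  · rintro y ⟨⟨hy0, hyc⟩, hset⟩
    have hset2 : Set.Ioc (0:ℝ) y = Set.Ioc 0 tm := by
      rw [← hset]
      ext t
      simp only [Set.mem_setOf_eq, Set.mem_Ioc]
      constructor
      · rintro ⟨⟨ht0, htc⟩, hFt⟩
        refine ⟨ht0, ?_⟩
        by_contra h
        push_neg at h
        have := hanti htmIoc ⟨ht0, htc⟩ h
        rw [hFtm] at this
        simp only [hF_def] at this hFt
        linarith
      · rintro ⟨ht0, httm⟩
        have htc : t ≤ c := le_trans httm htmc.le
        refine ⟨⟨ht0, htc⟩, ?_⟩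
        rcases eq_or_lt_of_le httm with rfl | hlt
        · simp only [hF_def] at hFtm; linarith
        · have := hanti ⟨ht0, htc⟩ htmIoc hlt
          rw [hFtm] at this
          simp only [hF_def] at this
          linarith
    have h1 : y ≤ tm := by
      have : y ∈ Set.Ioc (0:ℝ) tm := hset2 ▸ Set.mem_Ioc.2 ⟨hy0, le_refl y⟩
      exact this.2
    have h2 : tm ≤ y := by
      have : tm ∈ Set.Ioc (0:ℝ) y := hset2.symm ▸ Set.mem_Ioc.2 ⟨htm0, le_refl tm⟩
      exact this.2
    linarith
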